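/- arXiv:1706.06082 — 4 statements merged into one kernel-verified Lean document; each statement's English description precedes it below -/
import Mathlib

section
/- Define the equivalence relation ∼ on irrational numbers by: x ∼ y iff there exist i, j ∈ ℕ such that the i-th complete quotient of x equals the j-th complete quotient of y (equivalently, the tails of their continued fraction expansions eventually coincide). Then for every irrational x, one has -x ∼ x. -/
noncomputable def cq (x : ℝ) : ℕ → ℝ
  | 0 => x
  | n + 1 => 1 / (cq x n - ⌊cq x n⌋)

def CFEquiv (x y : ℝ) : Prop := ∃ i j : ℕ, cq x i = cq y j

lemma cq_succ (x : ℝ) (n : ℕ) : cq x (n + 1) = 1 / Int.fract (cq x n) := by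
  rw [Int.fract]; rfl

lemma cq_one (x : ℝ) : cq x 1 = 1 / Int.fract x := cq_succ x 0

lemma fract_step {a b : ℝ} (h : a = b + 1) :
    1 / Int.fract a = 1 / Int.fract b := by
  subst h; rw [Int.fract_add_one]

theorem neg_cfEquiv (x : ℝ) (hx : Irrational x) : CFEquiv (-x) x := by
  have hxz : Int.fract x ≠ 0 := fun h => hx.ne_int ⌊x⌋ (by
    have := Int.fract_add_floor x
    rw [h, zero_add] at this; exact this.symm)
  set t : ℝ := Int.fract x with htdef
  have htI : Irrational t := by
    have h := hx.sub_intCast ⌊x⌋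
    rwa [Int.self_sub_floor] at h
  have ht0 : 0 < t := lt_of_le_of_ne (Int.fract_nonneg x) (Ne.symm hxz)
  have ht1 : t < 1 := Int.fract_lt_one x
  have h1t : (0:ℝ) < 1 - t := by linarith
  have hneg1 : cq (-x) 1 = 1 / (1 - t) := by
    rw [cq_one, Int.fract_neg hxz]
  have htne : t ≠ 1 / 2 := fun h =>
    htI ⟨1/2, by push_cast; linarith [h]⟩
  rcases lt_or_gt_of_ne htne with hlt | hgt
  · -- t < 1/2 : cq(-x) 2 = 1/t - 1, compare with cq x 1 = 1/t
    have hfl : Int.fract (1 / (1 - t)) = 1 / (1 - t) - 1 := by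
      rw [Int.fract]
      have hf : ⌊1 / (1 - t)⌋ = 1 := by
        rw [Int.floor_eq_iff]
        constructor
        · push_cast
          rw [le_div_iff₀ h1t]; linarith
        · push_cast
          rw [div_lt_iff₀ h1t]; linarith
      rw [hf]; norm_num
    have haux : 1 / (1 - t) - 1 = t / (1 - t) := by field_simp; ring
    have hcq2 : cq (-x) 2 = 1 / t - 1 := by
      rw [show (2:ℕ) = 1 + 1 from rfl, cq_succ, hneg1, hfl, haux, one_div_div,
        sub_div, div_self ht0.ne', one_div]
    refine ⟨3, 2, ?_⟩
    have lhs : cq (-x) 3 = 1 / Int.fract (1 / t - 1) := by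
      rw [show (3:ℕ) = 2 + 1 from rfl, cq_succ, hcq2]
    have rhs : cq x 2 = 1 / Int.fract (1 / t) := by
      rw [show (2:ℕ) = 1 + 1 from rfl, cq_succ, cq_one]
    rw [lhs, rhs]
    exact (fract_step (by ring)).symm
  · -- t > 1/2 : cq x 2 = 1/(1-t) - 1
    have hfl : Int.fract (1 / t) = 1 / t - 1 := by
      rw [Int.fract]
      have hf : ⌊1 / t⌋ = 1 := by
        rw [Int.floor_eq_iff]
        constructor
        · push_cast
          rw [le_div_iff₀ ht0]; linarith
        · push_cast
          rw [div_lt_iff₀ ht0]; linarith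
      rw [hf]; norm_num
    have haux : 1 / t - 1 = (1 - t) / t := by field_simp
    have hcq2 : cq x 2 = 1 / (1 - t) - 1 := by
      rw [show (2:ℕ) = 1 + 1 from rfl, cq_succ, cq_one, hfl, haux, one_div_div]
      field_simp; ring
    refine ⟨2, 3, ?_⟩
    have lhs : cq (-x) 2 = 1 / Int.fract (1 / (1 - t)) := by
      rw [show (2:ℕ) = 1 + 1 from rfl, cq_succ, hneg1]
    have rhs : cq x 3 = 1 / Int.fract (1 / (1 - t) - 1) := by
      rw [show (3:ℕ) = 2 + 1 from rfl, cq_succ, hcq2]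
    rw [lhs, rhs]
    exact fract_step (by ring)
end

section
/- For every irrational x ≠ 0, one has 1/x ∼ x, where ∼ is the relation 'having a common complete quotient' on continued fraction expansions. -/
lemma cq_add (x : ℝ) (i j : ℕ) : cq x (i + j) = cq (cq x i) j := by
  induction j with
  | zero => rfl
  | succ n ih =>
    show cq x (i + n + 1) = cq (cq x i) (n + 1)
    rw [cq, cq, ih]

lemma cfe_symm {x y : ℝ} (h : CFEquiv x y) : CFEquiv y x := by
  obtain ⟨i, j, h⟩ := h; exact ⟨j, i, h.symm⟩

lemma cfe_trans {x y z : ℝ} (h1 : CFEquiv x y) (h2 : CFEquiv y z) : CFEquiv x z := by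
  obtain ⟨i, j, h1⟩ := h1; obtain ⟨j', l, h2⟩ := h2
  rcases le_total j j' with h | h
  · exact ⟨i + (j' - j), l, by rw [cq_add, h1, ← cq_add, Nat.add_sub_cancel' h, h2]⟩
  · exact ⟨i, l + (j - j'), by rw [cq_add, ← h2, ← cq_add, Nat.add_sub_cancel' h, ← h1]⟩

lemma cq_one_congr {x y : ℝ} (k : ℤ) (h : x = y + k) : cq x 1 = cq y 1 := by
  rw [cq_one, cq_one, h, Int.fract_add_intCast]

lemma lemA_half {f : ℝ} (h0 : 0 < f) (h1 : f < 1 / 2) :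
    cq (1 / (1 - f)) 2 = cq (1 / f) 1 := by
  have hf1 : (0 : ℝ) < 1 - f := by linarith
  have hcq1 : cq (1 / (1 - f)) 1 = 1 / f - 1 := by
    have hfloor : ⌊1 / (1 - f)⌋ = 1 := by
      rw [Int.floor_eq_iff]
      push_cast
      constructor
      · rw [le_div_iff₀ hf1]; linarith
      · rw [div_lt_iff₀ hf1]; linarith
    rw [cq, cq, hfloor]
    push_cast
    field_simp
    rw [sub_sub_cancel, div_self h0.ne']
  have : cq (1 / (1 - f)) 2 = cq (cq (1 / (1 - f)) 1) 1 := cq_add _ 1 1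
  rw [this, hcq1]
  exact cq_one_congr (-1) (by push_cast; ring)

lemma lemA {f : ℝ} (hf : Irrational f) (h0 : 0 < f) (h1 : f < 1) :
    CFEquiv (1 / f) (1 / (1 - f)) := by
  have hne : f ≠ 1 / 2 := by
    intro h; exact (hf.ne_rat (1 / 2)) (by rw [h]; norm_num)
  rcases lt_or_gt_of_ne hne with h | h
  · exact ⟨1, 2, (lemA_half h0 h).symm⟩
  · have h0' : 0 < 1 - f := by linarith
    have h1' : 1 - f < 1 / 2 := by linarith
    have := lemA_half h0' h1'
    rw [show (1 : ℝ) - (1 - f) = f by ring] at this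
    exact ⟨2, 1, this⟩

lemma lemB {x : ℝ} (hx : Irrational x) (h0 : -1 < x) (h1 : x < 0) :
    CFEquiv (1 / x) x := by
  have hx0 : x ≠ 0 := h1.ne
  set y : ℝ := 1 / x with hy_def
  have hy : y < -1 := by
    rw [hy_def, div_lt_iff_of_neg h1]; linarith
  have hy_irr : Irrational y := by
    rw [hy_def, one_div]; exact hx.inv
  set m : ℤ := ⌊y⌋ with hm_def
  set f : ℝ := Int.fract y with hf_def
  have hyf : y = m + f := by rw [hf_def, Int.fract]; ring
  have hf_irr : Irrational f := by
    have := hy_irr.sub_intCast m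
    rwa [Int.self_sub_floor] at this
  have hfne : f ≠ 0 := by simpa using hf_irr.ne_rat 0
  have hf0 : 0 < f := lt_of_le_of_ne (Int.fract_nonneg y) (Ne.symm hfne)
  have hf1 : f < 1 := Int.fract_lt_one y
  have hm2 : m ≤ -2 := by
    have : (m : ℝ) < -1 := lt_of_le_of_lt (Int.floor_le y) hy
    have : m < -1 := by exact_mod_cast this
    omega
  -- CFEquiv (1/x) (1/(1-f))
  have step1 : CFEquiv (1 / x) (1 / (1 - f)) := by
    refine cfe_trans ⟨1, 0, ?_⟩ (lemA hf_irr hf0 hf1)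
    rw [cq_one]; rfl
  -- now show CFEquiv x (1/(1-f))  (then conclude)
  have hfloorx : ⌊x⌋ = -1 := by
    rw [Int.floor_eq_iff (R := ℝ)] <;> push_cast
    constructor <;> linarith
  have hy0 : y ≠ 0 := by linarith
  have hy1 : y + 1 ≠ 0 := by linarith
  have hxy : x = 1 / y := by rw [hy_def, one_div_one_div]
  set k : ℤ := -(m + 1) with hk_def
  have hk1 : 1 ≤ k := by omega
  have hkz : -(y + 1) = (k : ℝ) - f := by
    rw [hyf, hk_def]; push_cast; ring
  have hn : -(y + 1) ≠ 0 := neg_ne_zero.2 hy1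
  have hcqx1 : cq x 1 = 1 + 1 / ((k : ℝ) - f) := by
    rw [cq, cq, hfloorx, ← hkz, hxy]
    push_cast
    rw [sub_neg_eq_add, div_add' _ _ _ hy0, one_div_div,
      show (1 : ℝ) + 1 / -(y + 1) = (-(y + 1) + 1) / -(y + 1) by rw [add_div, div_self hn],
      div_eq_div_iff (by intro h; exact hy1 (by linarith)) hn]
    ring
  have step2 : CFEquiv x (1 / (1 - f)) := by
    rcases eq_or_lt_of_le hk1 with hk | hk
    · -- k = 1 : cq x 2 = cq (1/(1-f)) 1
      refine ⟨2, 1, ?_⟩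
      have : cq x 2 = cq (cq x 1) 1 := cq_add x 1 1
      rw [this, hcqx1, ← hk]
      exact cq_one_congr 1 (by push_cast; ring)
    · -- k ≥ 2 : cq x 3 = 1/(1-f)
      have hk2 : 2 ≤ k := hk
      have hkR : (2 : ℝ) ≤ (k : ℝ) := by exact_mod_cast hk2
      have hz1 : 1 < (k : ℝ) - f := by linarith
      have hz0 : (0 : ℝ) < (k : ℝ) - f := by linarith
      have hinv : 0 < 1 / ((k : ℝ) - f) := by positivity
      have hinv1 : 1 / ((k : ℝ) - f) < 1 := by
        rw [div_lt_iff₀ hz0]; linarith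
      have hfloor1 : ⌊cq x 1⌋ = 1 := by
        rw [hcqx1, Int.floor_eq_iff]
        push_cast; constructor <;> linarith
      have hcqx2 : cq x 2 = (k : ℝ) - f := by
        have h2 : cq x 2 = 1 / (cq x 1 - ⌊cq x 1⌋) := rfl
        rw [h2, hfloor1, hcqx1]
        push_cast
        rw [show (1 : ℝ) + 1 / ((k:ℝ) - f) - 1 = 1 / ((k:ℝ) - f) by ring,
          one_div_one_div]
      have hfloor2 : ⌊cq x 2⌋ = k - 1 := by
        rw [hcqx2, Int.floor_eq_iff]
        push_cast; constructor <;> linarith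
      refine ⟨3, 0, ?_⟩
      have h3 : cq x 3 = 1 / (cq x 2 - ⌊cq x 2⌋) := rfl
      rw [h3, hfloor2, hcqx2]
      show _ = 1 / (1 - f)
      push_cast
      ring_nf
  exact cfe_trans step1 (cfe_symm step2)

theorem inv_cfEquiv (x : ℝ) (hx : Irrational x) (hx0 : x ≠ 0) : CFEquiv (1 / x) x := by
  rcases lt_or_gt_of_ne hx0 with hneg | hpos
  · -- x < 0
    rcases lt_or_gt_of_ne (hx.ne_rat (-1) : x ≠ ((-1 : ℚ) : ℝ)) with h | h
    · -- x < -1 : apply lemB to 1/x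
      have h1 : x < -1 := by simpa using h
      have h1x : Irrational (1 / x) := by rw [one_div]; exact hx.inv
      have h1x0 : -1 < 1 / x := by
        rw [lt_div_iff_of_neg hneg]; linarith
      have h1x1 : 1 / x < 0 := by
        exact div_neg_of_pos_of_neg one_pos hneg
      have := lemB h1x h1x0 h1x1
      rw [one_div_one_div] at this
      exact cfe_symm this
    · have h1 : -1 < x := by simpa using h
      exact lemB hx h1 hneg
  · -- x > 0
    rcases lt_or_gt_of_ne (hx.ne_rat 1 : x ≠ ((1 : ℚ) : ℝ)) with h | h
    · -- 0 < x < 1 : cq x 1 = 1/x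
      have h1 : x < 1 := by simpa using h
      refine ⟨0, 1, ?_⟩
      have hfl : ⌊x⌋ = 0 := by
        rw [Int.floor_eq_iff]; push_cast; constructor <;> linarith
      show 1 / x = cq x 1
      rw [cq, cq, hfl]
      norm_num
    · -- x > 1 : cq (1/x) 1 = x
      have h1 : 1 < x := by simpa using h
      refine ⟨1, 0, ?_⟩
      have h0' : 0 < 1 / x := by positivity
      have h1' : 1 / x < 1 := by rw [div_lt_iff₀ hpos]; linarith
      have hfl : ⌊1 / x⌋ = 0 := by
        rw [Int.floor_eq_iff]; push_cast; constructor <;> linarith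
      show cq (1 / x) 1 = x
      rw [cq, cq, hfl]
      push_cast
      rw [sub_zero, one_div_one_div]
end

section
/- Suppose x is irrational, c > 0, ad - bc = ±1, and a/c = [a₀, ..., a_{n-1}] is a continued fraction expansion of a/c with n of the parity such that ad - bc = (-1)ⁿ. Then there exists an integer r such that (ax + b)/(cx + d) = [a₀, ..., a_{n-1}, x + r], i.e., the homographic image equals the finite continued fraction with tail x + r. -/
noncomputable def cfVal : List ℤ → ℝ
  | [] => 0
  | [a] => (a : ℝ)
  | a :: l => (a : ℝ) + 1 / cfVal l

noncomputable def cfValT : List ℤ → ℝ → ℝ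
  | [], t => t
  | a :: l, t => (a : ℝ) + 1 / cfValT l t

/-- Convergent matrix: ((P, P'), (Q, Q')). -/
def cfM : List ℤ → (ℤ × ℤ) × ℤ × ℤ
  | [] => ((1, 0), 0, 1)
  | a :: l =>
      ((a * (cfM l).1.1 + (cfM l).2.1, a * (cfM l).1.2 + (cfM l).2.2),
        (cfM l).1.1, (cfM l).1.2)

lemma cfM_det (l : List ℤ) :
    (cfM l).1.1 * (cfM l).2.2 - (cfM l).1.2 * (cfM l).2.1 = (-1) ^ l.length := by
  induction l with
  | nil => simp [cfM]
  | cons a l ih =>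
      simp only [cfM, List.length_cons, pow_succ]
      ring_nf
      ring_nf at ih
      linarith

lemma cfM_pos (l : List ℤ) (h : ∀ y ∈ l, 1 ≤ y) :
    1 ≤ (cfM l).1.1 ∧ 0 ≤ (cfM l).1.2 ∧ 0 ≤ (cfM l).2.1 ∧ 0 ≤ (cfM l).2.2 := by
  induction l with
  | nil => simp [cfM]
  | cons a l ih =>
      have ha : 1 ≤ a := h a (by simp)
      have ih' := ih (fun y hy => h y (by simp [hy]))
      obtain ⟨h1, h2, h3, h4⟩ := ih'
      refine ⟨?_, ?_, ?_, ?_⟩ <;> simp only [cfM]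
      · nlinarith
      · nlinarith
      · linarith
      · linarith

lemma row_ne_zero (p p' : ℤ) (t : ℝ) (ht : Irrational t)
    (h : p ≠ 0 ∨ p' ≠ 0) : (p : ℝ) * t + p' ≠ 0 := by
  rcases eq_or_ne p 0 with hp | hp
  · rcases h with h | h
    · exact absurd hp h
    · simp only [hp, Int.cast_zero, zero_mul, zero_add]
      exact_mod_cast h
  · intro heq
    have : t = (-p' : ℝ) / p := by
      field_simp
      linarith
    rw [this] at ht
    have : ((-p' : ℤ) : ℝ) / ((p : ℤ) : ℝ) = ((-p' / p : ℚ) : ℝ) := by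
      push_cast; ring_nf
    exact (Rat.not_irrational _) (by rw [show (-(p' : ℝ)) / p = ((-p' / p : ℚ) : ℝ) by push_cast; ring_nf] at ht; exact ht)

lemma cfM_row1_ne (l : List ℤ) : (cfM l).1.1 ≠ 0 ∨ (cfM l).1.2 ≠ 0 := by
  by_contra h
  push_neg at h
  have := cfM_det l
  rw [h.1, h.2] at this
  simp at this
  have : ((-1 : ℤ)) ^ l.length ≠ 0 := by positivity
  omega

lemma cfM_row2_ne (l : List ℤ) : (cfM l).2.1 ≠ 0 ∨ (cfM l).2.2 ≠ 0 := by
  by_contra h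
  push_neg at h
  have := cfM_det l
  rw [h.1, h.2] at this
  simp at this
  have : ((-1 : ℤ)) ^ l.length ≠ 0 := by positivity
  omega

lemma cfValT_eq (l : List ℤ) (t : ℝ) (ht : Irrational t) :
    cfValT l t = ((cfM l).1.1 * t + (cfM l).1.2) / ((cfM l).2.1 * t + (cfM l).2.2) := by
  induction l with
  | nil => simp [cfValT, cfM]
  | cons a l ih =>
      have hden : ((cfM l).1.1 : ℝ) * t + (cfM l).1.2 ≠ 0 :=
        row_ne_zero _ _ t ht (cfM_row1_ne l)
      rw [show cfValT (a :: l) t = (a : ℝ) + 1 / cfValT l t from rfl, ih]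
      rw [one_div_div]
      simp only [cfM]
      push_cast
      rw [add_div' _ _ _ hden]
      ring

lemma cfVal_eq (l : List ℤ) (hl : l ≠ []) (htail : ∀ y ∈ l.tail, 1 ≤ y) :
    cfVal l = ((cfM l).1.1 : ℝ) / (cfM l).2.1 := by
  induction l with
  | nil => exact absurd rfl hl
  | cons a l ih =>
      cases l with
      | nil => simp [cfVal, cfM]
      | cons b l' =>
          have htail' : ∀ y ∈ b :: l', 1 ≤ y := htail
          have hP : 1 ≤ (cfM (b :: l')).1.1 := (cfM_pos _ htail').1
          have hPne : ((cfM (b :: l')).1.1 : ℝ) ≠ 0 := by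
            exact_mod_cast (by omega : (cfM (b :: l')).1.1 ≠ 0)
          have ih' := ih (by simp) (fun y hy => htail' y (List.mem_of_mem_tail hy))
          rw [show cfVal (a :: b :: l') = (a : ℝ) + 1 / cfVal (b :: l') from rfl, ih']
          rw [one_div_div, add_div' _ _ _ hPne]
          simp only [cfM]
          push_cast
          ring_nf

theorem homography_as_cf (x : ℝ) (hx : Irrational x) (a b c d : ℤ) (hc : 0 < c)
    (hdet : a * d - b * c = 1 ∨ a * d - b * c = -1)
    (l : List ℤ) (hl : l ≠ []) (htail : ∀ y ∈ l.tail, 1 ≤ y)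
    (hval : cfVal l = (a : ℝ) / (c : ℝ))
    (hpar : a * d - b * c = (-1) ^ l.length) :
    ∃ r : ℤ, ((a : ℝ) * x + b) / ((c : ℝ) * x + d) = cfValT l (x + r) := by
  set P := (cfM l).1.1 with hPdef
  set P' := (cfM l).1.2 with hP'def
  set Q := (cfM l).2.1 with hQdef
  set Q' := (cfM l).2.2 with hQ'def
  have hdetl : P * Q' - P' * Q = (-1) ^ l.length := cfM_det l
  -- Q ≥ 1
  have hQpos : 1 ≤ Q := by
    cases l with
    | nil => exact absurd rfl hl
    | cons a0 l' =>
        have : Q = (cfM l').1.1 := rfl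
        rw [this]
        exact (cfM_pos l' htail).1
  have hQne : (Q : ℝ) ≠ 0 := by exact_mod_cast (by omega : Q ≠ 0)
  have hcne : (c : ℝ) ≠ 0 := by exact_mod_cast hc.ne'
  -- P/Q = a/c as integers: P*c = a*Q
  have hcross : P * c = a * Q := by
    have h1 : (P : ℝ) / Q = (a : ℝ) / c := by
      rw [← cfVal_eq l hl htail]; exact hval
    have := (div_eq_div_iff hQne hcne).mp h1
    exact_mod_cast this
  -- coprimality
  have hcopPQ : IsCoprime Q P := by
    rcases hdet with h | h
    · rw [h] at hpar
      exact ⟨-P', Q', by linarith [hdetl, hpar.symm]⟩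
    · rw [h] at hpar
      exact ⟨P', -Q', by rw [← hpar] at hdetl; linarith [hdetl]⟩
  have hcopCA : IsCoprime c a := by
    rcases hdet with h | h
    · exact ⟨-b, d, by linarith⟩
    · exact ⟨b, -d, by linarith⟩
  have hQdvdC : Q ∣ c := hcopPQ.dvd_of_dvd_mul_left ⟨a, by linarith⟩
  have hCdvdQ : c ∣ Q := hcopCA.dvd_of_dvd_mul_left ⟨P, by linarith⟩
  have hQeqC : Q = c := Int.dvd_antisymm (by omega) hc.le hQdvdC hCdvdQ
  have hPeqA : P = a := by
    have : P * c = a * c := by rw [hcross, hQeqC]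
    exact mul_right_cancel₀ (by omega) this
  -- find r
  have hkey : a * (d - Q') = c * (b - P') := by
    have h2 : a * Q' - P' * c = (-1) ^ l.length := by
      rw [← hPeqA, ← hQeqC]; linarith [hdetl]
    have := hpar.trans h2.symm
    linarith
  have hcdvd : c ∣ (d - Q') := hcopCA.dvd_of_dvd_mul_left ⟨b - P', by linarith⟩
  obtain ⟨r, hr⟩ := hcdvd
  have hd : d = c * r + Q' := by omega
  have hb : b = a * r + P' := by
    have : a * (c * r) = c * (b - P') := by rw [← hr]; exact hkey
    have h3 : c * (a * r) = c * (b - P') := by linarith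
    have := mul_left_cancel₀ (by omega : c ≠ 0) h3
    omega
  refine ⟨r, ?_⟩
  have hxr : Irrational (x + (r : ℝ)) := hx.add_intCast r
  rw [cfValT_eq l _ hxr, ← hPdef, ← hP'def, ← hQdef, ← hQ'def, hPeqA, hQeqC]
  rw [hd, hb]
  push_cast
  ring_nf
end

section
/- Every element of PGL₂(ℤ) can be written in the form Vᵉ T^{a₀} U T^{a₁} U ⋯ U T^{aₙ} where a₁, ..., a_{n-1} are strictly positive integers, a₀ and aₙ are arbitrary integers, and e ∈ {0,1} with e = 1 only allowed if n = 0. -/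
abbrev GL2Z := Matrix.GeneralLinearGroup (Fin 2) ℤ
abbrev PGL2Z := GL2Z ⧸ Subgroup.center GL2Z

def Tgl : GL2Z := ⟨!![1, 1; 0, 1], !![1, -1; 0, 1], by decide, by decide⟩
def Ugl : GL2Z := ⟨!![0, 1; 1, 0], !![0, 1; 1, 0], by decide, by decide⟩
def Vgl : GL2Z := ⟨!![-1, 0; 0, 1], !![-1, 0; 0, 1], by decide, by decide⟩

def Tp : PGL2Z := QuotientGroup.mk Tgl
def Up : PGL2Z := QuotientGroup.mk Ugl
def Vp : PGL2Z := QuotientGroup.mk Vgl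


lemma UU : Ugl * Ugl = 1 := by ext : 1; decide
lemma Tpow (q : ℤ) : ((Tgl ^ q : GL2Z) : Matrix (Fin 2) (Fin 2) ℤ) = !![1, q; 0, 1] := by
  induction q using Int.induction_on with
  | zero => rw [zpow_zero]; decide
  | succ i ih =>
      rw [zpow_add_one, Units.val_mul, ih]
      simp [Tgl, Matrix.mul_fin_two]
      rw [add_comm]
  | pred i ih =>
      rw [zpow_sub_one, Units.val_mul, ih]
      have : ((Tgl⁻¹ : GL2Z) : Matrix (Fin 2) (Fin 2) ℤ) = !![1,-1;0,1] := rfl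
      rw [this]
      simp [Matrix.mul_fin_two]
      rw [show (-(i:ℤ) - 1) = -1 + -i by ring]

lemma neg_mem_center : (-1 : GL2Z) ∈ Subgroup.center GL2Z := by
  rw [Subgroup.mem_center_iff]; intro g; simp

lemma mk_neg (M : GL2Z) : (QuotientGroup.mk (-M) : PGL2Z) = QuotientGroup.mk M := by
  have : (-M : GL2Z) = (-1) * M := by simp
  rw [this, QuotientGroup.mk_mul, QuotientGroup.eq_one_iff _ |>.mpr neg_mem_center, one_mul]

noncomputable def Word (n : ℕ) (a : ℕ → ℤ) : PGL2Z :=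
  Tp ^ (a 0) * ((List.range n).map (fun i => Up * Tp ^ (a (i + 1)))).prod

lemma word_cons (q : ℤ) (n : ℕ) (a : ℕ → ℤ) :
    Tp ^ q * Up * Word n a = Word (n+1) (fun i => if i = 0 then q else a (i-1)) := by
  unfold Word
  rw [List.range_succ_eq_map, List.map_cons, List.prod_cons, List.map_map]
  have h1 : ((fun i => Up * Tp ^ (if i + 1 = 0 then q else a (i + 1 - 1))) ∘ Nat.succ)
      = fun i => Up * Tp ^ (a (i + 1)) := by funext i; simp
  rw [h1]
  simp only [if_pos rfl, Nat.add_sub_cancel]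
  simp [mul_assoc]

lemma mk_eq_T (M : GL2Z) (d : ℤ) (h : (M : Matrix (Fin 2) (Fin 2) ℤ) = !![1,d;0,1]) :
    (QuotientGroup.mk M : PGL2Z) = Tp ^ d := by
  have : M = Tgl ^ d := by ext : 1; rw [h, Tpow]
  rw [this, QuotientGroup.mk_zpow]; rfl

lemma mk_eq_VT (M : GL2Z) (d : ℤ) (h : (M : Matrix (Fin 2) (Fin 2) ℤ) = !![1,d;0,-1]) :
    (QuotientGroup.mk M : PGL2Z) = Vp * Tp ^ d := by
  have : M = -(Vgl * Tgl ^ d) := by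
    ext : 1
    rw [h]
    show _ = -(Vgl.val * (Tgl ^ d).val)
    rw [Tpow]
    simp [Vgl, Matrix.mul_fin_two]
  rw [this, mk_neg, QuotientGroup.mk_mul, QuotientGroup.mk_zpow]; rfl

lemma det_pm (M : GL2Z) : (M : Matrix (Fin 2) (Fin 2) ℤ).det = 1 ∨ (M : Matrix (Fin 2) (Fin 2) ℤ).det = -1 := by
  have h : IsUnit (M : Matrix (Fin 2) (Fin 2) ℤ).det := by
    apply IsUnit.of_mul_eq_one (M⁻¹ : GL2Z).val.det
    rw [← Matrix.det_mul, ← Units.val_mul, mul_inv_cancel]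
    simp
  exact Int.isUnit_iff.mp h

lemma word_zero (a : ℕ → ℤ) : Word 0 a = Tp ^ (a 0) := by simp [Word]

lemma word_two (a : ℕ → ℤ) :
    Word 2 a = Tp ^ (a 0) * (Up * Tp ^ (a 1)) * (Up * Tp ^ (a 2)) := by
  show _ = _
  unfold Word
  rw [List.range_succ, List.range_succ, List.range_zero]
  simp [mul_assoc]

lemma UpUp : Up * Up = 1 := by
  rw [Up, ← QuotientGroup.mk_mul, UU]; rfl

lemma UVgl : Ugl * Vgl = -(Tgl⁻¹ * Ugl * Tgl * Ugl * Tgl⁻¹) := by ext : 1; decide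

lemma UpVp : Up * Vp = Tp⁻¹ * Up * Tp * Up * Tp⁻¹ := by
  rw [Up, Vp, Tp, ← QuotientGroup.mk_mul, UVgl, mk_neg]
  simp only [← QuotientGroup.mk_inv, ← QuotientGroup.mk_mul]

lemma idUV (q b : ℤ) :
    Tp ^ q * Up * (Vp * Tp ^ b) =
      Word 2 (fun i => if i = 0 then q - 1 else if i = 1 then 1 else b - 1) := by
  rw [word_two]
  norm_num
  rw [show Tp ^ q * Up * (Vp * Tp ^ b) = Tp ^ q * (Up * Vp) * Tp ^ b by group, UpVp]
  group

lemma key_step (M M' : GL2Z) (q : ℤ) (h : M' = Ugl * Tgl ^ (-q) * M) :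
    (QuotientGroup.mk M : PGL2Z) = Tp ^ q * Up * QuotientGroup.mk M' := by
  have hM : M = Tgl ^ q * Ugl * M' := by
    rw [h, mul_assoc Ugl (Tgl ^ (-q)) M, mul_assoc (Tgl ^ q) Ugl, ← mul_assoc Ugl Ugl,
      UU, one_mul, ← mul_assoc, ← zpow_add]
    simp
  rw [hM, QuotientGroup.mk_mul, QuotientGroup.mk_mul, QuotientGroup.mk_zpow]
  rfl

lemma val_step (M M' : GL2Z) (q : ℤ) (h : M' = Ugl * Tgl ^ (-q) * M) :
    (M' : Matrix (Fin 2) (Fin 2) ℤ) =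
      !![(M : Matrix (Fin 2) (Fin 2) ℤ) 1 0, (M : Matrix (Fin 2) (Fin 2) ℤ) 1 1;
         (M : Matrix (Fin 2) (Fin 2) ℤ) 0 0 - q * (M : Matrix (Fin 2) (Fin 2) ℤ) 1 0,
         (M : Matrix (Fin 2) (Fin 2) ℤ) 0 1 - q * (M : Matrix (Fin 2) (Fin 2) ℤ) 1 1] := by
  have : (M' : Matrix (Fin 2) (Fin 2) ℤ) = (Ugl.val * (Tgl ^ (-q) : GL2Z).val) * M.val := by
    rw [h]; simp [Units.val_mul, mul_assoc]
  rw [this, Tpow, Matrix.eta_fin_two (M.val)]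
  simp [Ugl, Matrix.mul_fin_two, sub_eq_add_neg]

def GoodW (M : GL2Z) : Prop :=
  ∃ n a, (∀ i, i < n → 0 < a i) ∧ (QuotientGroup.mk M : PGL2Z) = Word n a

lemma inner : ∀ r : ℕ, ∀ M : GL2Z, (M : Matrix (Fin 2) (Fin 2) ℤ) 1 0 = (r : ℤ) →
    (r : ℤ) < (M : Matrix (Fin 2) (Fin 2) ℤ) 0 0 →
    GoodW M ∨ ((M : Matrix (Fin 2) (Fin 2) ℤ) 0 0 = 1 ∧
      ∃ b : ℤ, (QuotientGroup.mk M : PGL2Z) = Vp * Tp ^ b) := by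
  intro r
  induction r using Nat.strong_induction_on with
  | _ r IH =>
  intro M h10 h00
  rcases Nat.eq_zero_or_pos r with hr | hr
  · -- base case : bottom-left entry is 0
    subst hr
    have h10' : (M : Matrix (Fin 2) (Fin 2) ℤ) 1 0 = 0 := by exact_mod_cast h10
    have h00' : 0 < (M : Matrix (Fin 2) (Fin 2) ℤ) 0 0 := by exact_mod_cast h00
    have hd := det_pm M
    rw [Matrix.det_fin_two, h10', mul_zero, sub_zero] at hd
    have h1 : (M : Matrix (Fin 2) (Fin 2) ℤ) 0 0 = 1 := by
      have hdvd : (M : Matrix (Fin 2) (Fin 2) ℤ) 0 0 ∣ 1 := by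
        rcases hd with hd | hd
        · exact ⟨(M : Matrix (Fin 2) (Fin 2) ℤ) 1 1, hd.symm⟩
        · exact ⟨-(M : Matrix (Fin 2) (Fin 2) ℤ) 1 1, by linarith⟩
      exact Int.eq_one_of_dvd_one (le_of_lt h00') hdvd
    rw [h1, one_mul] at hd
    rcases hd with hd | hd
    · left
      refine ⟨0, fun _ => (M : Matrix (Fin 2) (Fin 2) ℤ) 0 1, fun i hi => absurd hi (by omega), ?_⟩
      rw [word_zero]
      refine mk_eq_T M _ ?_
      nth_rewrite 1 [Matrix.eta_fin_two (M.val)]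
      rw [h1, h10', hd]
    · right
      refine ⟨h1, (M : Matrix (Fin 2) (Fin 2) ℤ) 0 1, mk_eq_VT M _ ?_⟩
      nth_rewrite 1 [Matrix.eta_fin_two (M.val)]
      rw [h1, h10', hd]
  · -- inductive step : bottom-left entry r ≥ 1
    set p := (M : Matrix (Fin 2) (Fin 2) ℤ) 0 0 with hp
    have hrz : (0 : ℤ) < (r : ℤ) := by exact_mod_cast hr
    set q : ℤ := p / (r : ℤ) with hqdef
    have hq1 : 1 ≤ q := by
      rw [hqdef, Int.le_ediv_iff_mul_le hrz, one_mul]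
      exact le_of_lt h00
    set M' : GL2Z := Ugl * Tgl ^ (-q) * M with hM'
    have hval := val_step M M' q hM'
    have e00 : (M' : Matrix (Fin 2) (Fin 2) ℤ) 0 0 = (r : ℤ) := by rw [hval]; simpa using h10
    have e10 : (M' : Matrix (Fin 2) (Fin 2) ℤ) 1 0 = p % (r : ℤ) := by
      rw [hval]
      show p - q * (M : Matrix (Fin 2) (Fin 2) ℤ) 1 0 = _
      rw [h10, Int.emod_def, hqdef]; ring
    have hr2nonneg : 0 ≤ p % (r : ℤ) := Int.emod_nonneg p (ne_of_gt hrz)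
    have hr2lt : p % (r : ℤ) < (r : ℤ) := Int.emod_lt_of_pos p hrz
    have hcast : ((p % (r : ℤ)).toNat : ℤ) = p % (r : ℤ) := Int.toNat_of_nonneg hr2nonneg
    have hltn : (p % (r : ℤ)).toNat < r := by omega
    have hkey := key_step M M' q hM'
    rcases IH (p % (r : ℤ)).toNat hltn M' (by rw [e10, hcast]) (by rw [e00, hcast]; exact hr2lt)
      with ⟨n, a, hpos, hw⟩ | ⟨h1, b, hw⟩
    · left
      refine ⟨n + 1, fun i => if i = 0 then q else a (i - 1), ?_, ?_⟩
      · intro i hi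
        rcases Nat.eq_zero_or_pos i with rfl | hi0
        · simpa using lt_of_lt_of_le one_pos hq1
        · have : i - 1 < n := by omega
          simpa [Nat.pos_iff_ne_zero.mp hi0] using hpos (i - 1) this
      · rw [hkey, hw, word_cons]
    · -- M' is (projectively) V T^b ; then r = 1 and q ≥ 2
      left
      have hr1 : (r : ℤ) = 1 := by rw [← e00, h1]
      have hq2 : 2 ≤ q := by
        rw [hqdef, Int.le_ediv_iff_mul_le hrz, hr1, mul_one]
        omega
      refine ⟨2, fun i => if i = 0 then q - 1 else if i = 1 then 1 else b - 1, ?_, ?_⟩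
      · intro i hi
        interval_cases i <;> simp <;> omega
      · rw [hkey, hw, idUV]


theorem pgl2z_normal_form (g : PGL2Z) :
    ∃ (e : ℕ) (n : ℕ) (a : ℕ → ℤ),
      (e = 0 ∨ (e = 1 ∧ n = 0)) ∧
      (∀ i : ℕ, 1 ≤ i → i < n → 0 < a i) ∧
      g = Vp ^ e * Tp ^ (a 0) * ((List.range n).map (fun i => Up * Tp ^ (a (i + 1)))).prod := by
  have toGoal : ∀ (h : PGL2Z) (n : ℕ) (a : ℕ → ℤ), (∀ i : ℕ, 1 ≤ i → i < n → 0 < a i) →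
      h = Word n a →
      ∃ (e : ℕ) (n : ℕ) (a : ℕ → ℤ),
      (e = 0 ∨ (e = 1 ∧ n = 0)) ∧
      (∀ i : ℕ, 1 ≤ i → i < n → 0 < a i) ∧
      h = Vp ^ e * Tp ^ (a 0) * ((List.range n).map (fun i => Up * Tp ^ (a (i + 1)))).prod := by
    intro h n a hpos hw
    exact ⟨0, n, a, Or.inl rfl, hpos, by rw [pow_zero, one_mul, hw]; rfl⟩
  have toGoalV : ∀ (h : PGL2Z) (b : ℤ), h = Vp * Tp ^ b →
      ∃ (e : ℕ) (n : ℕ) (a : ℕ → ℤ),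
      (e = 0 ∨ (e = 1 ∧ n = 0)) ∧
      (∀ i : ℕ, 1 ≤ i → i < n → 0 < a i) ∧
      h = Vp ^ e * Tp ^ (a 0) * ((List.range n).map (fun i => Up * Tp ^ (a (i + 1)))).prod := by
    intro h b hw
    exact ⟨1, 0, fun _ => b, Or.inr ⟨rfl, rfl⟩, fun i h1 h2 => absurd h2 (by omega),
      by simpa using hw⟩
  have main : ∀ M : GL2Z,
      (0 < (M : Matrix (Fin 2) (Fin 2) ℤ) 1 0 ∨
        ((M : Matrix (Fin 2) (Fin 2) ℤ) 1 0 = 0 ∧ 0 < (M : Matrix (Fin 2) (Fin 2) ℤ) 0 0)) →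
      ∃ (e : ℕ) (n : ℕ) (a : ℕ → ℤ),
      (e = 0 ∨ (e = 1 ∧ n = 0)) ∧
      (∀ i : ℕ, 1 ≤ i → i < n → 0 < a i) ∧
      (QuotientGroup.mk M : PGL2Z) =
        Vp ^ e * Tp ^ (a 0) * ((List.range n).map (fun i => Up * Tp ^ (a (i + 1)))).prod := by
    intro M hM
    rcases hM with hc | ⟨hc, h00⟩
    · -- c > 0 : one division step, then the inner lemma
      set c : ℤ := (M : Matrix (Fin 2) (Fin 2) ℤ) 1 0 with hcdef
      set q : ℤ := (M : Matrix (Fin 2) (Fin 2) ℤ) 0 0 / c with hqdef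
      set M' : GL2Z := Ugl * Tgl ^ (-q) * M with hM'
      have hval := val_step M M' q hM'
      have e00 : (M' : Matrix (Fin 2) (Fin 2) ℤ) 0 0 = c := by rw [hval]; rfl
      have e10 : (M' : Matrix (Fin 2) (Fin 2) ℤ) 1 0 =
          (M : Matrix (Fin 2) (Fin 2) ℤ) 0 0 % c := by
        rw [hval]
        show _ - q * c = _
        rw [Int.emod_def, hqdef]; ring
      have hrnn : 0 ≤ (M : Matrix (Fin 2) (Fin 2) ℤ) 0 0 % c :=
        Int.emod_nonneg _ (ne_of_gt hc)
      have hrlt : (M : Matrix (Fin 2) (Fin 2) ℤ) 0 0 % c < c := Int.emod_lt_of_pos _ hc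
      have hcast : (((M : Matrix (Fin 2) (Fin 2) ℤ) 0 0 % c).toNat : ℤ) =
          (M : Matrix (Fin 2) (Fin 2) ℤ) 0 0 % c := Int.toNat_of_nonneg hrnn
      have hkey := key_step M M' q hM'
      rcases inner ((M : Matrix (Fin 2) (Fin 2) ℤ) 0 0 % c).toNat M'
        (by rw [e10, hcast]) (by rw [e00, hcast]; exact hrlt)
        with ⟨n, a, hpos, hw⟩ | ⟨h1, b, hw⟩
      · refine toGoal _ (n + 1) (fun i => if i = 0 then q else a (i - 1)) ?_ ?_
        · intro i hi1 hin
          have : i - 1 < n := by omega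
          simpa [Nat.pos_iff_ne_zero.mp hi1] using hpos (i - 1) this
        · rw [hkey, hw, word_cons]
      · refine toGoal _ 2 (fun i => if i = 0 then q - 1 else if i = 1 then 1 else b - 1) ?_ ?_
        · intro i hi1 hin
          interval_cases i
          simp
        · rw [hkey, hw, idUV]
    · -- c = 0
      rcases inner 0 M (by exact_mod_cast hc) (by exact_mod_cast h00)
        with ⟨n, a, hpos, hw⟩ | ⟨h1, b, hw⟩
      · exact toGoal _ n a (fun i h1 h2 => hpos i h2) hw
      · exact toGoalV _ b hw
  induction g using QuotientGroup.induction_on with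
  | H M =>
  have hneg : ∀ i j, ((-M : GL2Z) : Matrix (Fin 2) (Fin 2) ℤ) i j =
      -((M : Matrix (Fin 2) (Fin 2) ℤ) i j) := by
    intro i j; rw [Units.val_neg, Matrix.neg_apply]
  rcases lt_trichotomy ((M : Matrix (Fin 2) (Fin 2) ℤ) 1 0) 0 with hc | hc | hc
  · rw [← mk_neg M]
    exact main (-M) (Or.inl (by rw [hneg]; omega))
  · rcases lt_trichotomy ((M : Matrix (Fin 2) (Fin 2) ℤ) 0 0) 0 with h0 | h0 | h0
    · rw [← mk_neg M]
      exact main (-M) (Or.inr ⟨by rw [hneg, hc, neg_zero], by rw [hneg]; omega⟩)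
    · -- impossible : determinant would be 0
      exfalso
      have hd := det_pm M
      rw [Matrix.det_fin_two, hc, h0] at hd
      omega
    · exact main M (Or.inr ⟨hc, h0⟩)
  · exact main M (Or.inl hc)
end
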